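/- arXiv:2402.07952 — 4 statements merged into one kernel-verified Lean document; each statement's English description precedes it below -/
import Mathlib

section
/- Let a : ℕ → ℂ be an arbitrary sequence, let t, u ∈ ℂ, and let N ≥ 1 be an integer. Then the coefficient of q^N in the formal power series (over ℂ) ∑_{n=1}^{N} a(n) · t·u · q^n · (∏_{i=1}^{N} (1 − (1−u)·t·q^{n+i})) · (∏_{i=0}^{N} (1 − t·q^{n+i}))⁻¹ equals ∑_{π ∈ P(N)} t^{k(π)} u^{Q(π)} a(s(π)). (This is the coefficient-of-q^N form of Theorem 1 of the paper, ∑_{n≥1} a_n (tu((1−u)tq^{n+1})_∞/(tq^n)_∞) q^n = ∑_{n≥1} q^n ∑_{π∈P(n)} t^{k(π)} u^{Q(π)} a_{s(π)}, obtained by truncating the infinite q-Pochhammer products, which does not affect the coefficient of q^N.) -/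
open Finset PowerSeries

/-- `k(π)`: number of parts of the partition `π`, counted with multiplicity. -/
def kParts {n : ℕ} (π : n.Partition) : ℕ := Multiset.card π.parts

/-- `Q(π)`: number of distinct parts of the partition `π`. -/
def qParts {n : ℕ} (π : n.Partition) : ℕ := π.parts.toFinset.card

/-- `l(π)`: largest part of the partition `π` (`0` for the empty partition). -/
def lPart {n : ℕ} (π : n.Partition) : ℕ := π.parts.sup

/-- `s(π)`: smallest part of the partition `π` (`0` for the empty partition). -/
def sPart {n : ℕ} (π : n.Partition) : ℕ := WithTop.untopD 0 π.parts.toFinset.min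

/-! ### Auxiliary power series -/

/-- `u * ∑_{j ≥ 1} t^j q^{mj}`: the generating series of a nonempty block of parts `m`,
weighted by `t` per part and a single `u` for the distinct part. -/
noncomputable def Fse (t u : ℂ) (m : ℕ) : PowerSeries ℂ :=
  PowerSeries.mk fun d => if m ∣ d ∧ d ≠ 0 then u * t ^ (d / m) else 0

lemma coeff_Fse (t u : ℂ) (m d : ℕ) :
    PowerSeries.coeff d (Fse t u m) = if m ∣ d ∧ d ≠ 0 then u * t ^ (d / m) else 0 := by
  simp [Fse]

lemma lemA (t u : ℂ) (m : ℕ) (hm : 1 ≤ m) :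
    (1 - PowerSeries.C t * X ^ m) * Fse t u m = PowerSeries.C (t * u) * X ^ m := by
  have h : (1 - PowerSeries.C t * X ^ m) * Fse t u m
      = Fse t u m - PowerSeries.C t * (Fse t u m * X ^ m) := by ring
  rw [h]
  ext d
  rw [map_sub, coeff_C_mul, PowerSeries.coeff_mul_X_pow', coeff_C_mul, PowerSeries.coeff_X_pow]
  simp only [coeff_Fse]
  have hmpos : 0 < m := hm
  by_cases hdvd : m ∣ d
  · obtain ⟨j, rfl⟩ := hdvd
    rcases Nat.eq_zero_or_pos j with rfl | hj
    · rw [mul_zero, if_neg (by simp), if_neg (by omega), if_neg (by omega)]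
      ring
    rcases eq_or_lt_of_le (show 1 ≤ j from hj) with rfl | hj2
    · rw [if_pos ⟨⟨1, by ring⟩, by omega⟩, if_pos (by omega : m ≤ m * 1),
        if_neg (by omega : ¬ (m ∣ m * 1 - m ∧ m * 1 - m ≠ 0)), if_pos (by omega : m * 1 = m)]
      rw [show m * 1 / m = 1 by rw [mul_one, Nat.div_self hmpos]]
      ring
    · have h2 : m ≤ m * j := Nat.le_mul_of_pos_right m (by omega)
      have h3 : m * j ≠ 0 := by positivity
      have h5 : m * j - m = m * (j - 1) := by
        rw [Nat.mul_sub]; omega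
      have h7 : m * j - m ≠ 0 := by
        rw [h5]; exact Nat.mul_ne_zero (by omega) (by omega)
      rw [if_pos ⟨dvd_mul_right m j, h3⟩, if_pos h2, if_pos ⟨h5 ▸ dvd_mul_right m (j-1), h7⟩,
        if_neg (show ¬ m * j = m by rintro h'; nlinarith)]
      rw [h5, Nat.mul_div_cancel_left _ hmpos, Nat.mul_div_cancel_left _ hmpos]
      have : t ^ j = t * t ^ (j - 1) := by
        conv_lhs => rw [show j = 1 + (j-1) by omega]
        rw [pow_add, pow_one]
      rw [this]; ring
  · have h1 : ¬ (m ∣ d ∧ d ≠ 0) := fun h => hdvd h.1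
    have h2 : ¬ d = m := fun h => hdvd (h ▸ dvd_refl m)
    rw [if_neg h1, if_neg h2]
    by_cases h3 : m ≤ d
    · have h4 : ¬ (m ∣ d - m ∧ d - m ≠ 0) := by
        rintro ⟨h5, h6⟩
        exact hdvd ((Nat.sub_add_cancel h3) ▸ dvd_add h5 (dvd_refl m))
      rw [if_pos h3, if_neg h4]; ring
    · rw [if_neg h3]; ring

lemma lemB (t u : ℂ) (m : ℕ) (hm : 1 ≤ m) :
    (1 - PowerSeries.C t * X ^ m) * (1 + Fse t u m)
      = 1 - PowerSeries.C ((1 - u) * t) * X ^ m := by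
  rw [mul_add, mul_one, lemA t u m hm, show (1 - u) * t = t - t * u by ring, map_sub]
  ring

lemma coeff_one_add_Fse (t u : ℂ) (m d : ℕ) :
    PowerSeries.coeff d (1 + Fse t u m)
      = if d = 0 then 1 else if m ∣ d then u * t ^ (d / m) else 0 := by
  rw [map_add, PowerSeries.coeff_one, coeff_Fse]
  rcases eq_or_ne d 0 with rfl | hd
  · simp
  · rw [if_neg hd, if_neg hd, zero_add]
    by_cases h : m ∣ d
    · rw [if_pos ⟨h, hd⟩, if_pos h]
    · rw [if_neg (fun h' => h h'.1), if_neg h]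

/-! ### Step 1: eliminating the inverses -/

lemma step1 (a : ℕ → ℂ) (t u : ℂ) (N n : ℕ) (hn : 1 ≤ n) :
    PowerSeries.C (a n) * PowerSeries.C (t * u) * (PowerSeries.X : PowerSeries ℂ) ^ n *
      (∏ i ∈ Finset.Icc 1 N,
        (1 - PowerSeries.C ((1 - u) * t) * (PowerSeries.X : PowerSeries ℂ) ^ (n + i))) *
      (∏ i ∈ Finset.range (N + 1),
        (1 - PowerSeries.C t * (PowerSeries.X : PowerSeries ℂ) ^ (n + i)))⁻¹
    = PowerSeries.C (a n) * (Fse t u n * ∏ m ∈ Finset.Icc (n+1) (n+N), (1 + Fse t u m)) := by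
  set D : PowerSeries ℂ := ∏ i ∈ Finset.range (N + 1),
      (1 - PowerSeries.C t * (PowerSeries.X : PowerSeries ℂ) ^ (n + i)) with hDdef
  have hc : PowerSeries.constantCoeff D = 1 := by
    rw [hDdef, map_prod]
    apply Finset.prod_eq_one
    intro i _
    simp [zero_pow (by omega : n + i ≠ 0)]
  have hDne : D ≠ 0 := by
    intro h; rw [h, map_zero] at hc; exact one_ne_zero hc.symm
  apply mul_right_cancel₀ hDne
  have hinv : D⁻¹ * D = 1 := PowerSeries.inv_mul_cancel D (by rw [hc]; exact one_ne_zero)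
  have hre : ∀ (g : ℕ → PowerSeries ℂ),
      ∏ m ∈ Finset.Icc (n+1) (n+N), g m = ∏ i ∈ Finset.Icc 1 N, g (n + i) := by
    intro g
    rw [← Finset.map_add_left_Icc, Finset.prod_map]
    rfl
  have hsplit : D = (1 - PowerSeries.C t * (PowerSeries.X : PowerSeries ℂ) ^ n) *
      ∏ i ∈ Finset.Icc 1 N,
        (1 - PowerSeries.C t * (PowerSeries.X : PowerSeries ℂ) ^ (n + i)) := by
    rw [hDdef, show Finset.range (N+1) = insert 0 (Finset.Icc 1 N) from by
        ext x; simp; omega,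
      Finset.prod_insert (by simp), add_zero]
  calc PowerSeries.C (a n) * PowerSeries.C (t * u) * (PowerSeries.X : PowerSeries ℂ) ^ n *
      (∏ i ∈ Finset.Icc 1 N,
        (1 - PowerSeries.C ((1 - u) * t) * (PowerSeries.X : PowerSeries ℂ) ^ (n + i))) *
        D⁻¹ * D
      = PowerSeries.C (a n) * (PowerSeries.C (t * u) * (PowerSeries.X : PowerSeries ℂ) ^ n *
        (∏ i ∈ Finset.Icc 1 N,
          (1 - PowerSeries.C ((1 - u) * t) * (PowerSeries.X : PowerSeries ℂ) ^ (n + i)))) *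
        (D⁻¹ * D) := by ring
    _ = PowerSeries.C (a n) * (PowerSeries.C (t * u) * (PowerSeries.X : PowerSeries ℂ) ^ n *
        (∏ i ∈ Finset.Icc 1 N,
          (1 - PowerSeries.C ((1 - u) * t) * (PowerSeries.X : PowerSeries ℂ) ^ (n + i)))) := by
        rw [hinv, mul_one]
    _ = PowerSeries.C (a n) *
        (((1 - PowerSeries.C t * (PowerSeries.X : PowerSeries ℂ) ^ n) * Fse t u n) *
          ∏ i ∈ Finset.Icc 1 N,
            ((1 - PowerSeries.C t * (PowerSeries.X : PowerSeries ℂ) ^ (n + i)) *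
              (1 + Fse t u (n + i)))) := by
        rw [lemA t u n hn, Finset.prod_congr rfl (fun i hi => lemB t u (n+i) (by omega))]
    _ = PowerSeries.C (a n) *
          (Fse t u n * ∏ m ∈ Finset.Icc (n+1) (n+N), (1 + Fse t u m)) * D := by
        rw [hre (fun m => 1 + Fse t u m), hsplit, Finset.prod_mul_distrib]
        ring

/-! ### Step 2: the counting lemma -/

noncomputable def divF (l : ℕ →₀ ℕ) : ℕ →₀ ℕ :=
  Finsupp.onFinset l.support (fun m => l m / m)
    (fun m h => by
      rw [Finsupp.mem_support_iff]
      intro h0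
      apply h
      show l m / m = 0
      rw [h0, Nat.zero_div])

lemma divF_apply (l : ℕ →₀ ℕ) (m : ℕ) : divF l m = l m / m := rfl

noncomputable def countF {N : ℕ} (π : N.Partition) : ℕ →₀ ℕ :=
  Finsupp.onFinset π.parts.toFinset (fun m => m * π.parts.count m)
    (fun m h => by
      rw [Multiset.mem_toFinset, ← Multiset.count_ne_zero]
      intro h0
      apply h
      show m * π.parts.count m = 0
      rw [h0, mul_zero])

lemma countF_apply {N : ℕ} (π : N.Partition) (m : ℕ) : countF π m = m * π.parts.count m := rfl

lemma sum_toFinset_mul_count (s : Multiset ℕ) :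
    ∑ m ∈ s.toFinset, m * s.count m = s.sum := by
  conv_rhs => rw [← Multiset.toFinsupp_toMultiset s]
  rw [Finsupp.sum_toMultiset, Finsupp.sum, Multiset.toFinsupp_support]
  exact Finset.sum_congr rfl fun m _ => by
    rw [Multiset.toFinsupp_apply, smul_eq_mul, mul_comm]

lemma count_zero_parts {N : ℕ} (π : N.Partition) : π.parts.count 0 = 0 :=
  Multiset.count_eq_zero_of_notMem (fun h => lt_irrefl 0 (π.parts_pos h))

lemma divF_countF {N : ℕ} (π : N.Partition) : divF (countF π) = π.parts.toFinsupp := by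
  ext m
  rw [divF_apply, countF_apply, Multiset.toFinsupp_apply]
  rcases Nat.eq_zero_or_pos m with rfl | hm
  · rw [count_zero_parts, mul_zero, Nat.zero_div]
  · exact Nat.mul_div_cancel_left _ hm

lemma support_divF (l : ℕ →₀ ℕ) (h : ∀ m ∈ l.support, m ∣ l m ∧ 1 ≤ m) :
    (divF l).support = l.support := by
  apply Finset.Subset.antisymm (Finsupp.support_onFinset_subset)
  intro m hm
  obtain ⟨hdvd, hm1⟩ := h m hm
  rw [Finsupp.mem_support_iff] at hm ⊢
  show l m / m ≠ 0
  refine (Nat.div_ne_zero_iff).2 ⟨by omega, ?_⟩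
  exact Nat.le_of_dvd (Nat.pos_of_ne_zero hm) hdvd

section
variable (n M N : ℕ)

abbrev goodSet : Finset (ℕ →₀ ℕ) :=
  (Finset.finsuppAntidiag (Finset.Icc n M) N).filter (fun l => ∀ m ∈ Finset.Icc n M, m ∣ l m)

lemma mem_goodSet_iff (l : ℕ →₀ ℕ) :
    l ∈ goodSet n M N ↔
      ((Finset.Icc n M).sum l = N ∧ l.support ⊆ Finset.Icc n M) ∧
        ∀ m ∈ Finset.Icc n M, m ∣ l m := by
  rw [Finset.mem_filter, Finset.mem_finsuppAntidiag]

variable {n M N}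

lemma goodSet_support_facts {l : ℕ →₀ ℕ} (hn : 1 ≤ n) (hl : l ∈ goodSet n M N) :
    ∀ m ∈ l.support, m ∣ l m ∧ 1 ≤ m := by
  rw [mem_goodSet_iff] at hl
  intro m hm
  have h1 := hl.1.2 hm
  have h2 := Finset.mem_Icc.mp h1
  exact ⟨hl.2 m h1, by omega⟩

noncomputable def mkPart (hn : 1 ≤ n) (l : ℕ →₀ ℕ) (hl : l ∈ goodSet n M N) :
    N.Partition where
  parts := Finsupp.toMultiset (divF l)
  parts_pos := by
    intro p hp
    rw [Finsupp.mem_toMultiset] at hp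
    have h1 : p ∈ l.support := Finsupp.support_onFinset_subset hp
    rw [mem_goodSet_iff] at hl
    have h2 := Finset.mem_Icc.mp (hl.1.2 h1)
    omega
  parts_sum := by
    obtain ⟨⟨hsum, hsub⟩, hgood⟩ := (mem_goodSet_iff n M N l).mp hl
    have hs : (divF l).support = l.support := support_divF l (goodSet_support_facts hn hl)
    rw [Finsupp.sum_toMultiset, Finsupp.sum, hs]
    calc ∑ m ∈ l.support, divF l m • m
        = ∑ m ∈ l.support, l m := Finset.sum_congr rfl (fun m hm => by
          rw [smul_eq_mul, divF_apply, Nat.div_mul_cancel (hgood m (hsub hm))])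
      _ = ∑ m ∈ Finset.Icc n M, l m :=
          Finset.sum_subset hsub (fun x _ hx => Finsupp.notMem_support_iff.mp hx)
      _ = N := hsum

end

/-- Main counting lemma: the coefficient of `q^N` in `∏_{m=n}^{M} (1 + Fse t u m)` is the
weighted count of partitions of `N` with all parts in `[n, M]`. -/
lemma main_count (t u : ℂ) (n M N : ℕ) (hn : 1 ≤ n) :
    PowerSeries.coeff N (∏ m ∈ Finset.Icc n M, (1 + Fse t u m))
      = ∑ π ∈ Finset.univ.filter (fun π : N.Partition => ∀ p ∈ π.parts, p ∈ Finset.Icc n M),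
          t ^ kParts π * u ^ qParts π := by
  rw [PowerSeries.coeff_prod]
  have hzero : ∀ l ∈ Finset.finsuppAntidiag (Finset.Icc n M) N,
      (∏ m ∈ Finset.Icc n M, PowerSeries.coeff (l m) (1 + Fse t u m)) ≠ 0 →
      ∀ m ∈ Finset.Icc n M, m ∣ l m := by
    intro l _ hne m hm
    by_contra hdvd
    apply hne
    apply Finset.prod_eq_zero hm
    rw [coeff_one_add_Fse, if_neg (fun h0 : l m = 0 => hdvd (h0.symm ▸ dvd_zero m)),
      if_neg hdvd]
  rw [← Finset.sum_filter_of_ne hzero]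
  refine Finset.sum_bij' (fun l hl => mkPart hn l hl) (fun π _ => countF π)
    ?_ ?_ ?_ ?_ ?_
  · intro l hl
    rw [Finset.mem_filter]
    refine ⟨Finset.mem_univ _, fun p hp => ?_⟩
    have hp' : p ∈ (divF l).support := (Finsupp.mem_toMultiset _ _).mp hp
    exact ((mem_goodSet_iff n M N l).mp hl).1.2 (Finsupp.support_onFinset_subset hp')
  · intro π hπ
    rw [Finset.mem_filter] at hπ
    have hπ2 := hπ.2
    rw [mem_goodSet_iff]
    have hsub : π.parts.toFinset ⊆ Finset.Icc n M :=
      fun p hp => hπ2 p (Multiset.mem_toFinset.mp hp)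
    refine ⟨⟨?_, Finsupp.support_onFinset_subset.trans hsub⟩, fun m _ => dvd_mul_right m _⟩
    rw [← Finset.sum_subset hsub (fun x _ hx => by
      rw [countF_apply,
        Multiset.count_eq_zero_of_notMem (fun hxx => hx (Multiset.mem_toFinset.mpr hxx)),
        mul_zero])]
    calc ∑ m ∈ π.parts.toFinset, countF π m
        = ∑ m ∈ π.parts.toFinset, m * π.parts.count m := rfl
      _ = π.parts.sum := sum_toFinset_mul_count _
      _ = N := π.parts_sum
  · intro l hl
    obtain ⟨⟨hsum, hsub⟩, hgood⟩ := (mem_goodSet_iff n M N l).mp hl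
    ext m
    rw [countF_apply]
    show m * (Finsupp.toMultiset (divF l)).count m = l m
    rw [Finsupp.count_toMultiset, divF_apply]
    rcases eq_or_ne (l m) 0 with h0 | h0
    · rw [h0, Nat.zero_div, mul_zero]
    · exact Nat.mul_div_cancel' (hgood m (hsub (Finsupp.mem_support_iff.mpr h0)))
  · intro π hπ
    apply Nat.Partition.ext
    show Finsupp.toMultiset (divF (countF π)) = π.parts
    rw [divF_countF, Multiset.toFinsupp_toMultiset]
  · intro l hl
    obtain ⟨⟨hsum, hsub⟩, hgood⟩ := (mem_goodSet_iff n M N l).mp hl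
    have hs : (divF l).support = l.support := support_divF l (goodSet_support_facts hn hl)
    have h1 : ∏ m ∈ Finset.Icc n M, PowerSeries.coeff (l m) (1 + Fse t u m)
        = ∏ m ∈ l.support, (u * t ^ (l m / m)) := by
      rw [← Finset.prod_subset hsub (fun x _ hnx => by
        rw [coeff_one_add_Fse, if_pos (Finsupp.notMem_support_iff.mp hnx)])]
      exact Finset.prod_congr rfl (fun m hm => by
        rw [coeff_one_add_Fse, if_neg (Finsupp.mem_support_iff.mp hm),
          if_pos (hgood m (hsub hm))])
    rw [h1, Finset.prod_mul_distrib, Finset.prod_const, Finset.prod_pow_eq_pow_sum]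
    have hk : kParts (mkPart hn l hl) = ∑ m ∈ l.support, l m / m := by
      show Multiset.card (Finsupp.toMultiset (divF l)) = _
      rw [Finsupp.card_toMultiset, Finsupp.sum, hs]
      rfl
    have hq : qParts (mkPart hn l hl) = l.support.card := by
      show (Finsupp.toMultiset (divF l)).toFinset.card = _
      rw [Finsupp.toFinset_toMultiset, hs]
    rw [hk, hq]
    ring

/-! ### Facts about the smallest part -/

lemma parts_toFinset_nonempty {N : ℕ} (hN : 1 ≤ N) (π : N.Partition) :
    π.parts.toFinset.Nonempty := by
  rw [Multiset.toFinset_nonempty]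
  intro h
  have := π.parts_sum
  rw [h, Multiset.sum_zero] at this
  omega

lemma sPart_eq_min' {N : ℕ} (hN : 1 ≤ N) (π : N.Partition) :
    sPart π = π.parts.toFinset.min' (parts_toFinset_nonempty hN π) := by
  rw [sPart, ← Finset.coe_min' (parts_toFinset_nonempty hN π)]
  rfl

lemma sPart_mem {N : ℕ} (hN : 1 ≤ N) (π : N.Partition) : sPart π ∈ π.parts := by
  rw [sPart_eq_min' hN]
  exact Multiset.mem_toFinset.mp (Finset.min'_mem _ _)

lemma sPart_le {N : ℕ} (hN : 1 ≤ N) (π : N.Partition) {p : ℕ} (hp : p ∈ π.parts) :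
    sPart π ≤ p := by
  rw [sPart_eq_min' hN]
  exact Finset.min'_le _ _ (Multiset.mem_toFinset.mpr hp)

lemma sPart_eq_iff {N : ℕ} (hN : 1 ≤ N) (π : N.Partition) (n : ℕ) :
    sPart π = n ↔ n ∈ π.parts ∧ ∀ p ∈ π.parts, n ≤ p := by
  constructor
  · rintro rfl
    exact ⟨sPart_mem hN π, fun p hp => sPart_le hN π hp⟩
  · rintro ⟨h1, h2⟩
    rw [sPart_eq_min' hN]
    exact le_antisymm (Finset.min'_le _ _ (Multiset.mem_toFinset.mpr h1))
      (Finset.le_min' _ _ _ (fun y hy => h2 y (Multiset.mem_toFinset.mp hy)))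

lemma sPart_mem_Icc {N : ℕ} (hN : 1 ≤ N) (π : N.Partition) : sPart π ∈ Finset.Icc 1 N := by
  rw [Finset.mem_Icc]
  have h1 := sPart_mem hN π
  refine ⟨π.parts_pos h1, ?_⟩
  have := Multiset.le_sum_of_mem h1
  rwa [π.parts_sum] at this

lemma part_le_self {N : ℕ} (π : N.Partition) {p : ℕ} (hp : p ∈ π.parts) : p ≤ N := by
  have := Multiset.le_sum_of_mem hp
  rwa [π.parts_sum] at this

/-- Coefficient of the `n`-th summand. -/
lemma coeff_summand (t u : ℂ) (N n : ℕ) (hn : 1 ≤ n) (hnN : n ≤ N) (hN : 1 ≤ N) :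
    PowerSeries.coeff N (Fse t u n * ∏ m ∈ Finset.Icc (n+1) (n+N), (1 + Fse t u m))
      = ∑ π ∈ Finset.univ.filter (fun π : N.Partition => sPart π = n),
          t ^ kParts π * u ^ qParts π := by
  have hsplit : Fse t u n * ∏ m ∈ Finset.Icc (n+1) (n+N), (1 + Fse t u m)
      = (∏ m ∈ Finset.Icc n (n+N), (1 + Fse t u m))
        - ∏ m ∈ Finset.Icc (n+1) (n+N), (1 + Fse t u m) := by
    rw [show Finset.Icc n (n+N) = insert n (Finset.Icc (n+1) (n+N)) from by
        ext x; simp [Finset.mem_Icc, Finset.mem_insert]; omega,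
      Finset.prod_insert (by simp [Finset.mem_Icc])]
    ring
  rw [hsplit, map_sub, main_count t u n (n+N) N hn, main_count t u (n+1) (n+N) N (by omega)]
  have key := Finset.sum_filter_add_sum_filter_not
    (Finset.univ.filter (fun π : N.Partition => ∀ p ∈ π.parts, p ∈ Finset.Icc n (n+N)))
    (fun π : N.Partition => ∀ p ∈ π.parts, p ∈ Finset.Icc (n+1) (n+N))
    (fun π : N.Partition => t ^ kParts π * u ^ qParts π)
  rw [Finset.filter_filter, Finset.filter_filter] at key
  have e1 : Finset.univ.filter (fun π : N.Partition =>
      (∀ p ∈ π.parts, p ∈ Finset.Icc n (n+N)) ∧ ∀ p ∈ π.parts, p ∈ Finset.Icc (n+1) (n+N))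
      = Finset.univ.filter (fun π : N.Partition => ∀ p ∈ π.parts, p ∈ Finset.Icc (n+1) (n+N)) := by
    apply Finset.filter_congr
    intro π _
    constructor
    · exact fun h => h.2
    · intro h
      refine ⟨fun p hp => ?_, h⟩
      have := Finset.mem_Icc.mp (h p hp)
      rw [Finset.mem_Icc]
      omega
  have e2 : Finset.univ.filter (fun π : N.Partition =>
      (∀ p ∈ π.parts, p ∈ Finset.Icc n (n+N)) ∧ ¬ ∀ p ∈ π.parts, p ∈ Finset.Icc (n+1) (n+N))
      = Finset.univ.filter (fun π : N.Partition => sPart π = n) := by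
    apply Finset.filter_congr
    intro π _
    rw [sPart_eq_iff hN]
    constructor
    · rintro ⟨h1, h2⟩
      push_neg at h2
      obtain ⟨p0, hp0, hp0'⟩ := h2
      have hb1 := Finset.mem_Icc.mp (h1 p0 hp0)
      rw [Finset.mem_Icc] at hp0'
      have hp0n : p0 = n := by omega
      exact ⟨hp0n ▸ hp0, fun p hp => (Finset.mem_Icc.mp (h1 p hp)).1⟩
    · rintro ⟨h1, h2⟩
      constructor
      · intro p hp
        rw [Finset.mem_Icc]
        have := part_le_self π hp
        exact ⟨h2 p hp, by omega⟩
      · intro h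
        have := Finset.mem_Icc.mp (h n h1)
        omega
  rw [e1, e2] at key
  -- key : ∑_{parts ⊆ [n+1,n+N]} + ∑_{sPart = n} = ∑_{parts ⊆ [n,n+N]}
  linear_combination -key

/-! ### Main theorem -/

/-- Theorem 1 (coefficient-of-`q^N` form): the weighted partition generating function
for the smallest part. -/
theorem theorem1_coeff (a : ℕ → ℂ) (t u : ℂ) (N : ℕ) (hN : 1 ≤ N) :
    PowerSeries.coeff N
      (∑ n ∈ Finset.Icc 1 N,
        PowerSeries.C (a n) * PowerSeries.C (t * u) * (PowerSeries.X : PowerSeries ℂ) ^ n *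
          (∏ i ∈ Finset.Icc 1 N,
            (1 - PowerSeries.C ((1 - u) * t) * (PowerSeries.X : PowerSeries ℂ) ^ (n + i))) *
          (∏ i ∈ Finset.range (N + 1),
            (1 - PowerSeries.C t * (PowerSeries.X : PowerSeries ℂ) ^ (n + i)))⁻¹) =
    ∑ π : N.Partition, t ^ kParts π * u ^ qParts π * a (sPart π) := by
  rw [map_sum]
  have hstep : ∀ n ∈ Finset.Icc 1 N,
      PowerSeries.coeff N
        (PowerSeries.C (a n) * PowerSeries.C (t * u) *
          (PowerSeries.X : PowerSeries ℂ) ^ n *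
          (∏ i ∈ Finset.Icc 1 N,
            (1 - PowerSeries.C ((1 - u) * t) * (PowerSeries.X : PowerSeries ℂ) ^ (n + i))) *
          (∏ i ∈ Finset.range (N + 1),
            (1 - PowerSeries.C t * (PowerSeries.X : PowerSeries ℂ) ^ (n + i)))⁻¹)
      = ∑ π ∈ Finset.univ.filter (fun π : N.Partition => sPart π = n),
          t ^ kParts π * u ^ qParts π * a (sPart π) := by
    intro n hn
    rw [Finset.mem_Icc] at hn
    rw [step1 a t u N n hn.1, PowerSeries.coeff_C_mul,
      coeff_summand t u N n hn.1 hn.2 hN, Finset.mul_sum]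
    apply Finset.sum_congr rfl
    intro π hπ
    rw [Finset.mem_filter] at hπ
    rw [hπ.2]
    ring
  rw [Finset.sum_congr rfl hstep]
  exact Finset.sum_fiberwise_of_maps_to (fun π _ => sPart_mem_Icc hN π) _
end

section
/- Let a : ℕ → ℂ be an arbitrary sequence, let t, u ∈ ℂ, and let N ≥ 1 be an integer. Then the coefficient of q^N in the formal power series (over ℂ) ∑_{n=1}^{N} a(n) · t·u · q^n · (∏_{i=1}^{n−1} (1 − (1−u)·t·q^{i})) · (∏_{i=1}^{n} (1 − t·q^{i}))⁻¹ equals ∑_{π ∈ P(N)} t^{k(π)} u^{Q(π)} a(l(π)). (This is the coefficient-of-q^N form of Theorem 2 of the paper, ∑_{n≥1} a_n (tu((1−u)tq)_{n−1}/(tq)_n) q^n = ∑_{n≥1} q^n ∑_{π∈P(n)} t^{k(π)} u^{Q(π)} a_{l(π)}; the terms with n > N are divisible by q^{n} and hence do not affect the coefficient of q^N.) -/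
open Finset PowerSeries

open scoped Classical

noncomputable section

def dS (t : ℂ) (i : ℕ) : PowerSeries ℂ :=
  PowerSeries.mk fun m => if i ∣ m then t ^ (m / i) else 0

lemma dS_mul (t : ℂ) {i : ℕ} (hi : 0 < i) :
    dS t i * (1 - PowerSeries.C t * PowerSeries.X ^ i) = 1 := by
  have h : dS t i * (PowerSeries.C t * PowerSeries.X ^ i)
      = (dS t i * PowerSeries.C t) * PowerSeries.X ^ i := by ring
  ext m
  rw [mul_sub, mul_one, map_sub, h, PowerSeries.coeff_mul_X_pow', PowerSeries.coeff_mul_C,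
    PowerSeries.coeff_one, dS, PowerSeries.coeff_mk]
  rcases Nat.eq_zero_or_pos m with rfl | hm
  · simp [Nat.le_zero, hi.ne']
  · rw [if_neg (by omega : ¬ m = 0)]
    by_cases hd : i ∣ m
    · have him : i ≤ m := Nat.le_of_dvd hm hd
      rw [if_pos him, PowerSeries.coeff_mk, if_pos (Nat.dvd_sub hd dvd_rfl), if_pos hd]
      have h2 : 1 ≤ m / i := (Nat.one_le_div_iff hi).mpr him
      have h1 : (m - i) / i = m / i - 1 := by
        obtain ⟨c, rfl⟩ := hd
        have hic : i * c - i = i * (c - 1) := by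
          cases c with
          | zero => simp
          | succ d => simp [Nat.mul_succ]
        rw [hic, Nat.mul_div_cancel_left _ hi, Nat.mul_div_cancel_left _ hi]
      obtain ⟨k, hk⟩ : ∃ k, m / i = k + 1 := ⟨m / i - 1, by omega⟩
      rw [h1, hk, Nat.add_sub_cancel, pow_succ]
      ring
    · rw [if_neg hd]
      by_cases him : i ≤ m
      · rw [if_pos him, PowerSeries.coeff_mk, if_neg, zero_mul, sub_zero]
        intro hd2
        exact hd ((Nat.sub_add_cancel him) ▸ dvd_add hd2 (dvd_refl i))
      · rw [if_neg him, sub_zero]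

lemma prod_inv_eq (t : ℂ) (n : ℕ) :
    (∏ i ∈ Icc 1 n, (1 - PowerSeries.C t * PowerSeries.X ^ i))⁻¹ = ∏ i ∈ Icc 1 n, dS t i := by
  rw [PowerSeries.inv_eq_iff_mul_eq_one]
  · rw [← prod_mul_distrib]
    rw [Finset.prod_congr rfl fun i hi => dS_mul t (by
      simp only [mem_Icc] at hi; omega)]
    exact prod_const_one
  · rw [map_prod]
    apply prod_ne_zero_iff.mpr
    intro i hi
    simp only [mem_Icc] at hi
    simp [zero_pow (by omega : i ≠ 0)]

/-- the weight function -/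
def wF (t u : ℂ) (n i j : ℕ) : ℂ := if j = 0 then (if i = n then 0 else 1) else u * t ^ j

lemma factor_lt (t u : ℂ) {n i : ℕ} (hi : 0 < i) (hin : i ≠ n) :
    (1 - PowerSeries.C ((1 - u) * t) * PowerSeries.X ^ i) * dS t i =
    PowerSeries.mk fun m => if i ∣ m then wF t u n i (m / i) else 0 := by
  have key : (1 - PowerSeries.C ((1 - u) * t) * PowerSeries.X ^ i)
      = (1 - PowerSeries.C t * PowerSeries.X ^ i) + PowerSeries.C (u * t) * PowerSeries.X ^ i := by
    simp only [map_mul, map_sub, map_one]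
    ring
  rw [key, add_mul, mul_comm _ (dS t i), dS_mul t hi,
    show PowerSeries.C (u * t) * PowerSeries.X ^ i * dS t i
      = (PowerSeries.C (u * t) * dS t i) * PowerSeries.X ^ i by ring]
  ext m
  rw [map_add, PowerSeries.coeff_one, PowerSeries.coeff_mul_X_pow', PowerSeries.coeff_C_mul,
    PowerSeries.coeff_mk, dS, wF]
  rcases Nat.eq_zero_or_pos m with rfl | hm
  · simp [Nat.le_zero, hi.ne', hin]
  · rw [if_neg (by omega : ¬ m = 0)]
    by_cases hd : i ∣ m
    · have him : i ≤ m := Nat.le_of_dvd hm hd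
      have hq : m / i ≠ 0 := (Nat.div_pos him hi).ne'
      rw [if_pos him, PowerSeries.coeff_mk, if_pos (Nat.dvd_sub hd dvd_rfl), if_pos hd,
        if_neg hq, zero_add]
      have h1 : (m - i) / i = m / i - 1 := by
        obtain ⟨c, rfl⟩ := hd
        have hic : i * c - i = i * (c - 1) := by
          cases c with
          | zero => simp
          | succ d => simp [Nat.mul_succ]
        rw [hic, Nat.mul_div_cancel_left _ hi, Nat.mul_div_cancel_left _ hi]
      obtain ⟨k, hk⟩ : ∃ k, m / i = k + 1 := ⟨m / i - 1, (Nat.succ_pred_eq_of_pos (Nat.pos_of_ne_zero hq)).symm⟩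
      rw [h1, hk, Nat.add_sub_cancel, pow_succ]
      ring
    · rw [if_neg hd]
      by_cases him : i ≤ m
      · rw [if_pos him, PowerSeries.coeff_mk, if_neg, mul_zero, add_zero]
        intro hd2
        exact hd ((Nat.sub_add_cancel him) ▸ dvd_add hd2 (dvd_refl i))
      · rw [if_neg him, add_zero]

lemma factor_n (t u : ℂ) {n : ℕ} (hn : 0 < n) :
    (PowerSeries.C (t * u) * PowerSeries.X ^ n) * dS t n =
    PowerSeries.mk fun m => if n ∣ m then wF t u n n (m / n) else 0 := by
  rw [show PowerSeries.C (t * u) * PowerSeries.X ^ n * dS t n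
      = (PowerSeries.C (t * u) * dS t n) * PowerSeries.X ^ n by ring]
  ext m
  rw [PowerSeries.coeff_mul_X_pow', PowerSeries.coeff_C_mul, PowerSeries.coeff_mk, wF]
  rcases Nat.eq_zero_or_pos m with rfl | hm
  · simp [Nat.le_zero, hn.ne']
  · by_cases hd : n ∣ m
    · have him : n ≤ m := Nat.le_of_dvd hm hd
      have hq : m / n ≠ 0 := (Nat.div_pos him hn).ne'
      rw [if_pos him, dS, PowerSeries.coeff_mk, if_pos (Nat.dvd_sub hd dvd_rfl), if_pos hd,
        if_neg hq]
      have h1 : (m - n) / n = m / n - 1 := by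
        obtain ⟨c, rfl⟩ := hd
        have hic : n * c - n = n * (c - 1) := by
          cases c with
          | zero => simp
          | succ d => simp [Nat.mul_succ]
        rw [hic, Nat.mul_div_cancel_left _ hn, Nat.mul_div_cancel_left _ hn]
      obtain ⟨k, hk⟩ : ∃ k, m / n = k + 1 := ⟨m / n - 1, (Nat.succ_pred_eq_of_pos (Nat.pos_of_ne_zero hq)).symm⟩
      rw [h1, hk, Nat.add_sub_cancel, pow_succ]
      ring
    · rw [if_neg hd]
      by_cases him : n ≤ m
      · rw [if_pos him, dS, PowerSeries.coeff_mk, if_neg, mul_zero]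
        intro hd2
        exact hd ((Nat.sub_add_cancel him) ▸ dvd_add hd2 (dvd_refl n))
      · rw [if_neg him]

lemma key_coeff (N : ℕ) (s : Finset ℕ) (hs : ∀ i ∈ s, 0 < i) (w : ℕ → ℕ → ℂ) :
    PowerSeries.coeff N (∏ i ∈ s, PowerSeries.mk fun m => if i ∣ m then w i (m / i) else 0) =
    ∑ π ∈ Finset.univ.filter (fun π : N.Partition => ∀ j ∈ π.parts, j ∈ s),
      ∏ i ∈ s, w i (π.parts.count i) := by
  rw [PowerSeries.coeff_prod]
  simp_rw [PowerSeries.coeff_mk]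
  rw [← Finset.sum_filter_of_ne (p := fun l : ℕ →₀ ℕ => ∀ i ∈ s, i ∣ l i)
    (fun l _ hne i hi => by
      by_contra hdvd
      exact hne (Finset.prod_eq_zero hi (if_neg hdvd)))]
  symm
  apply Finset.sum_bij (fun (p : N.Partition) _ =>
    (⟨Finset.filter (fun i => i ≠ 0) p.parts.toFinset, fun i => p.parts.count i • i,
      fun a => by
        simp only [smul_eq_mul, ne_eq, mul_eq_zero, Multiset.count_eq_zero]
        rw [not_or, not_not]
        simp only [Multiset.mem_toFinset, not_not, Finset.mem_filter]⟩ : ℕ →₀ ℕ))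
  · intro p hp
    simp only [Finset.mem_filter, Finset.mem_univ, true_and] at hp
    simp only [Finset.mem_filter, Finset.mem_finsuppAntidiag]
    refine ⟨⟨?_, fun i hi => ?_⟩, fun i _ => by simp only [Finsupp.coe_mk, smul_eq_mul]; exact dvd_mul_left i _⟩
    · conv_rhs => rw [← p.parts_sum]
      rw [Finset.sum_multiset_count_of_subset _ s]
      · simp only [Finsupp.coe_mk, smul_eq_mul]
      · intro i
        simp only [Multiset.mem_toFinset, not_not, Finset.mem_filter]
        apply hp
    · simp only [ne_eq, Multiset.mem_toFinset, not_not, Finset.mem_filter, and_imp] at hi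
      exact hp i hi.1
  · intro p₁ hp₁ p₂ hp₂ h
    apply Nat.Partition.ext
    simp only [Finset.mem_filter, Finset.mem_univ, true_and] at hp₁ hp₂
    ext i
    simp only [ne_eq, Multiset.mem_toFinset, not_not, smul_eq_mul, Finsupp.mk.injEq] at h
    by_cases hi : i = 0
    · rw [hi]
      rw [Multiset.count_eq_zero_of_notMem]
      · rw [Multiset.count_eq_zero_of_notMem]
        intro a; exact Nat.lt_irrefl 0 (hs 0 (hp₂ 0 a))
      intro a; exact Nat.lt_irrefl 0 (hs 0 (hp₁ 0 a))
    · rw [← mul_left_inj' hi]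
      rw [funext_iff] at h
      exact h.2 i
  · rintro f hf
    simp only [Finset.mem_filter, Finset.mem_finsuppAntidiag] at hf
    obtain ⟨⟨hsum, hsupp⟩, hdvd⟩ := hf
    refine ⟨⟨∑ i ∈ s, Multiset.replicate (f i / i) i, ?_, ?_⟩, ?_, ?_⟩
    · intro i hi
      simp only [exists_prop, Multiset.mem_sum, Finset.mem_map, Function.Embedding.coeFn_mk] at hi
      rcases hi with ⟨t, ht, z⟩
      rw [Multiset.eq_of_mem_replicate z]
      exact hs t ht
    · simp_rw [Multiset.sum_sum, Multiset.sum_replicate, Nat.nsmul_eq_mul]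
      rw [← hsum]
      refine Finset.sum_congr rfl fun i hi => Nat.div_mul_cancel (hdvd i hi)
    · simp only [Finset.mem_filter, Finset.mem_univ, true_and]
      intro i hi
      rw [Multiset.mem_sum] at hi
      rcases hi with ⟨j, hj₁, hj₂⟩
      rwa [Multiset.eq_of_mem_replicate hj₂]
    · ext i
      simp_rw [Multiset.count_sum', Multiset.count_replicate, Finset.sum_ite_eq']
      simp only [ne_eq, Multiset.mem_toFinset, not_not, smul_eq_mul, ite_mul,
        zero_mul, Finsupp.coe_mk]
      split_ifs with h
      · apply Nat.div_mul_cancel (hdvd i h)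
      · apply symm
        rw [← Finsupp.notMem_support_iff]
        exact Finset.notMem_mono hsupp h
  · intro p hp
    simp only [Finset.mem_filter, Finset.mem_univ, true_and] at hp
    apply Finset.prod_congr rfl
    intro i hi
    have hipos := hs i hi
    simp only [Finsupp.coe_mk, smul_eq_mul]
    rw [if_pos (dvd_mul_left i _), Nat.mul_div_cancel _ hipos]

lemma rearrange (t u : ℂ) {n : ℕ} (hn : 0 < n) :
    PowerSeries.C (t * u) * PowerSeries.X ^ n *
      (∏ i ∈ Icc 1 (n - 1), (1 - PowerSeries.C ((1 - u) * t) * PowerSeries.X ^ i)) *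
      (∏ i ∈ Icc 1 n, (1 - PowerSeries.C t * PowerSeries.X ^ i))⁻¹
    = ∏ i ∈ Icc 1 n, PowerSeries.mk fun m => if i ∣ m then wF t u n i (m / i) else 0 := by
  rw [prod_inv_eq]
  have h0 : Icc 1 n = insert n (Icc 1 (n - 1)) := by
    have := Finset.insert_Icc_right_eq_Icc_add_one (a := 1) (b := n - 1) (by omega)
    rw [show (n - 1) + 1 = n by omega] at this
    exact this.symm
  have hnot : n ∉ Icc 1 (n - 1) := by
    simp only [mem_Icc]; omega
  rw [h0, Finset.prod_insert hnot, Finset.prod_insert hnot]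
  rw [show PowerSeries.C (t * u) * PowerSeries.X ^ n *
      (∏ i ∈ Icc 1 (n - 1), (1 - PowerSeries.C ((1 - u) * t) * PowerSeries.X ^ i)) *
      (dS t n * ∏ i ∈ Icc 1 (n - 1), dS t i)
    = (PowerSeries.C (t * u) * PowerSeries.X ^ n * dS t n) *
      ((∏ i ∈ Icc 1 (n - 1), (1 - PowerSeries.C ((1 - u) * t) * PowerSeries.X ^ i)) *
        ∏ i ∈ Icc 1 (n - 1), dS t i) from by ring]
  rw [factor_n t u hn, ← Finset.prod_mul_distrib]
  congr 1
  apply Finset.prod_congr rfl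
  intro i hi
  simp only [mem_Icc] at hi
  exact factor_lt t u (by omega) (by omega)

lemma sup_mem_of_ne_zero {s : Multiset ℕ} (h : s.sup ≠ 0) : s.sup ∈ s := by
  induction s using Multiset.induction with
  | empty => simp at h
  | cons a s ih =>
    rw [Multiset.sup_cons] at h ⊢
    rcases le_total a s.sup with hle | hle
    · rw [sup_eq_right.mpr hle] at h ⊢
      exact Multiset.mem_cons_of_mem (ih h)
    · rw [sup_eq_left.mpr hle]
      exact Multiset.mem_cons_self _ _

lemma cond_iff {N n : ℕ} (hn : 0 < n) (π : N.Partition) :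
    ((∀ j ∈ π.parts, j ∈ Icc 1 n) ∧ π.parts.count n ≠ 0) ↔ lPart π = n := by
  unfold lPart
  constructor
  · rintro ⟨hsub, hc⟩
    refine le_antisymm (Multiset.sup_le.mpr fun b hb => (mem_Icc.mp (hsub b hb)).2) ?_
    exact Multiset.le_sup (Multiset.count_ne_zero.mp hc)
  · rintro rfl
    refine ⟨fun j hj => mem_Icc.mpr ⟨π.parts_pos hj, Multiset.le_sup hj⟩, ?_⟩
    rw [Multiset.count_ne_zero]
    exact sup_mem_of_ne_zero (by omega)

lemma weight_eval (t u : ℂ) {N n : ℕ} (π : N.Partition)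
    (hsub : ∀ j ∈ π.parts, j ∈ Icc 1 n) (hcount : π.parts.count n ≠ 0) :
    ∏ i ∈ Icc 1 n, wF t u n i (π.parts.count i) = t ^ kParts π * u ^ qParts π := by
  have step : ∀ i ∈ Icc 1 n, wF t u n i (π.parts.count i)
      = if π.parts.count i ≠ 0 then u * t ^ π.parts.count i else 1 := by
    intro i _
    rw [wF]
    by_cases h : π.parts.count i = 0
    · rw [if_pos h, if_neg (not_not.mpr h), if_neg (fun he : i = n => hcount (he ▸ h))]
    · rw [if_neg h, if_pos h]
  rw [Finset.prod_congr rfl step, ← Finset.prod_filter]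
  have hfe : (Icc 1 n).filter (fun i => π.parts.count i ≠ 0) = π.parts.toFinset := by
    ext i
    simp only [mem_filter, Multiset.mem_toFinset, ← Multiset.count_ne_zero]
    exact ⟨fun h => h.2, fun h => ⟨hsub i (Multiset.count_ne_zero.mp h), h⟩⟩
  rw [hfe, Finset.prod_mul_distrib, Finset.prod_const, Finset.prod_pow_eq_pow_sum]
  rw [Multiset.toFinset_sum_count_eq]
  rw [kParts, qParts]
  ring

/-- Theorem 2 (coefficient-of-`q^N` form): the weighted partition generating function
for the largest part. -/
theorem theorem2_coeff (a : ℕ → ℂ) (t u : ℂ) (N : ℕ) (hN : 1 ≤ N) :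
    PowerSeries.coeff N
      (∑ n ∈ Finset.Icc 1 N,
        PowerSeries.C (a n) * PowerSeries.C (t * u) * (PowerSeries.X : PowerSeries ℂ) ^ n *
          (∏ i ∈ Finset.Icc 1 (n - 1),
            (1 - PowerSeries.C ((1 - u) * t) * (PowerSeries.X : PowerSeries ℂ) ^ i)) *
          (∏ i ∈ Finset.Icc 1 n,
            (1 - PowerSeries.C t * (PowerSeries.X : PowerSeries ℂ) ^ i))⁻¹) =
    ∑ π : N.Partition, t ^ kParts π * u ^ qParts π * a (lPart π) := by
  rw [map_sum]
  have step1 : ∀ n ∈ Icc 1 N,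
      PowerSeries.coeff N
        (PowerSeries.C (a n) * PowerSeries.C (t * u) * (PowerSeries.X : PowerSeries ℂ) ^ n *
          (∏ i ∈ Finset.Icc 1 (n - 1),
            (1 - PowerSeries.C ((1 - u) * t) * (PowerSeries.X : PowerSeries ℂ) ^ i)) *
          (∏ i ∈ Finset.Icc 1 n,
            (1 - PowerSeries.C t * (PowerSeries.X : PowerSeries ℂ) ^ i))⁻¹)
      = ∑ π ∈ Finset.univ.filter (fun π : N.Partition => lPart π = n),
          t ^ kParts π * u ^ qParts π * a (lPart π) := by
    intro n hn
    rw [mem_Icc] at hn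
    have hn1 : 0 < n := hn.1
    have hre : PowerSeries.C (a n) * PowerSeries.C (t * u) * (PowerSeries.X : PowerSeries ℂ) ^ n *
          (∏ i ∈ Finset.Icc 1 (n - 1),
            (1 - PowerSeries.C ((1 - u) * t) * (PowerSeries.X : PowerSeries ℂ) ^ i)) *
          (∏ i ∈ Finset.Icc 1 n,
            (1 - PowerSeries.C t * (PowerSeries.X : PowerSeries ℂ) ^ i))⁻¹
        = PowerSeries.C (a n) *
            ∏ i ∈ Icc 1 n, PowerSeries.mk fun m => if i ∣ m then wF t u n i (m / i) else 0 := by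
      rw [← rearrange t u hn1]
      ring
    rw [hre, PowerSeries.coeff_C_mul,
      key_coeff N (Icc 1 n) (fun i hi => by rw [mem_Icc] at hi; omega) (wF t u n)]
    rw [← Finset.sum_filter_of_ne (p := fun π : N.Partition => π.parts.count n ≠ 0)
      (fun π hπ hne hc => by
        apply hne
        apply Finset.prod_eq_zero (mem_Icc.mpr ⟨hn1, le_refl n⟩ : n ∈ Icc 1 n)
        simp [wF, hc])]
    rw [Finset.filter_filter]
    have hset : Finset.univ.filter
          (fun π : N.Partition => (∀ j ∈ π.parts, j ∈ Icc 1 n) ∧ π.parts.count n ≠ 0)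
        = Finset.univ.filter (fun π : N.Partition => lPart π = n) := by
      apply Finset.filter_congr
      intro π _
      exact cond_iff hn1 π
    rw [hset, mul_sum]
    apply Finset.sum_congr rfl
    intro π hπ
    simp only [Finset.mem_filter, Finset.mem_univ, true_and] at hπ
    obtain ⟨hsub, hcount⟩ := (cond_iff hn1 π).mpr hπ
    rw [weight_eval t u π hsub hcount, hπ]
    ring
  rw [Finset.sum_congr rfl step1]
  have hmaps : ∀ π : N.Partition, π ∈ (Finset.univ : Finset N.Partition) → lPart π ∈ Icc 1 N := by
    intro π _
    rw [mem_Icc]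
    have hne : π.parts ≠ 0 := by
      intro h
      have h2 := π.parts_sum
      rw [h] at h2
      simp at h2
      omega
    obtain ⟨j, hj⟩ := Multiset.exists_mem_of_ne_zero hne
    refine ⟨le_trans (π.parts_pos hj) (Multiset.le_sup hj), ?_⟩
    apply Multiset.sup_le.mpr
    intro b hb
    calc b ≤ π.parts.sum := Multiset.le_sum_of_mem hb
      _ = N := π.parts_sum
  exact Finset.sum_fiberwise_of_maps_to hmaps _

end
end

section
/- Let t, u ∈ ℂ, let m ≥ 1 be an integer, and let N ≥ 1 be an integer. Then the coefficient of q^N in the formal power series (over ℂ) t·u · q^m · (∏_{i=1}^{m−1} (1 − (1−u)·t·q^{i})) · (∏_{i=1}^{m} (1 − t·q^{i}))⁻¹ equals ∑_{π ∈ P(N), l(π) = m} t^{k(π)} u^{Q(π)}, the sum being over all partitions of N whose largest part equals m. (This is the generating-function identity, established in the proof of Theorem 2, for partitions with prescribed largest part.) -/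
open Finset PowerSeries

section Aux
open scoped Classical

noncomputable def wtSeries (W : ℕ → ℂ) (i : ℕ) : PowerSeries ℂ :=
  PowerSeries.mk fun n => if i ∣ n then W (n / i) else 0

theorem key_series (t u c : ℂ) (i : ℕ) (hi : 0 < i) :
    wtSeries (fun a => if a = 0 then c else t ^ a * u) i *
      (1 - PowerSeries.C (R := ℂ) t * (PowerSeries.X : PowerSeries ℂ) ^ i) =
    PowerSeries.C (R := ℂ) c + PowerSeries.C (R := ℂ) ((u - c) * t) * (PowerSeries.X : PowerSeries ℂ) ^ i := by
  ext n
  have h1 : (wtSeries (fun a => if a = 0 then c else t ^ a * u) i) *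
      (PowerSeries.C (R := ℂ) t * X ^ i) = PowerSeries.C (R := ℂ) t *
      ((wtSeries (fun a => if a = 0 then c else t ^ a * u) i) * X ^ i) := by ring
  rw [mul_sub, mul_one, map_sub, h1, map_add]
  rw [PowerSeries.coeff_C_mul, PowerSeries.coeff_C_mul, coeff_mul_X_pow',
    PowerSeries.coeff_X_pow, PowerSeries.coeff_C]
  simp only [wtSeries, coeff_mk]
  rcases Nat.eq_zero_or_pos n with rfl | hn
  · simp [show ¬ i ≤ 0 by omega, show (0:ℕ) ≠ i by omega]
  rcases Nat.lt_or_ge n i with hni | hni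
  · have : ¬ i ∣ n := fun hd => absurd (Nat.le_of_dvd hn hd) (by omega)
    simp [this, show ¬ i ≤ n by omega, show n ≠ i by omega, show n ≠ 0 by omega]
  rcases eq_or_ne n i with rfl | hne
  · simp only [dvd_refl, if_pos, Nat.div_self hi, Nat.sub_self, Nat.zero_div,
      dvd_zero, if_pos rfl, if_neg one_ne_zero, if_neg hn.ne', if_pos rfl, if_pos hni]
    ring
  · rw [if_neg hne, if_neg hn.ne', if_pos hni, mul_zero, add_zero]
    by_cases hd : i ∣ n
    · obtain ⟨a, rfl⟩ := hd
      have ha2 : 2 ≤ a := by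
        rcases Nat.lt_or_ge a 2 with h | h
        · interval_cases a <;> omega
        · exact h
      have e1 : i * a - i = i * (a - 1) := by
        rw [Nat.mul_sub, mul_one]
      have e2 : i ∣ i * a := dvd_mul_right _ _
      have e3 : i ∣ i * a - i := by rw [e1]; exact dvd_mul_right _ _
      rw [if_pos e2, if_pos e3, e1, Nat.mul_div_cancel_left _ hi,
        Nat.mul_div_cancel_left _ hi, if_neg (by omega), if_neg (by omega)]
      have : t ^ a = t * t ^ (a - 1) := by
        conv_lhs => rw [show a = (a - 1) + 1 by omega]
        rw [pow_succ]; ring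
      rw [this]; ring
    · have hd' : ¬ i ∣ n - i := fun h => hd (by
        have := Nat.sub_add_cancel hni
        rw [← this]; exact Nat.dvd_add h dvd_rfl)
      rw [if_neg hd, if_neg hd', mul_zero, sub_zero]

theorem weighted_prop (n : ℕ) (s : Finset ℕ) (hs : ∀ i ∈ s, 0 < i) (W : ℕ → ℕ → ℂ) :
    PowerSeries.coeff (R := ℂ) n (∏ i ∈ s, wtSeries (W i) i) =
      ∑ p ∈ Finset.univ.filter (fun p : n.Partition => ∀ j ∈ p.parts, j ∈ s),
        ∏ i ∈ s, W i (p.parts.count i) := by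
  rw [coeff_prod]
  simp only [wtSeries, coeff_mk]
  symm
  rw [← Finset.sum_filter_of_ne (p := fun l : ℕ →₀ ℕ => ∀ i ∈ s, i ∣ l i)
    (fun l _ hl i hi => by
      by_contra hd
      exact hl (Finset.prod_eq_zero hi (if_neg hd)))]
  set φ : (p : n.Partition) →
      p ∈ Finset.univ.filter (fun p : n.Partition => ∀ j ∈ p.parts, j ∈ s) → (ℕ →₀ ℕ) :=
    fun p _ => {
      toFun := fun i => p.parts.count i • i
      support := Finset.filter (fun i => i ≠ 0) p.parts.toFinset
      mem_support_toFun := fun a => by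
        simp only [smul_eq_mul, ne_eq, mul_eq_zero, Multiset.count_eq_zero]
        rw [not_or, not_not]
        simp only [Multiset.mem_toFinset, not_not, mem_filter] }
  refine Finset.sum_bij φ ?_ ?_ ?_ ?_
  · intro p hp
    simp only [φ, mem_filter, mem_finsuppAntidiag]
    simp only [mem_filter, mem_univ, true_and] at hp
    dsimp only [ne_eq, smul_eq_mul, Finsupp.coe_mk]
    refine ⟨⟨?_, fun i ↦ ?_⟩, fun i _ ↦ dvd_mul_left i _⟩
    · conv_rhs => simp [← p.parts_sum]
      rw [sum_multiset_count_of_subset _ s]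
      · simp only [smul_eq_mul]
      · intro i
        simp only [Multiset.mem_toFinset, not_not, mem_filter]
        apply hp
    · simp only [ne_eq, Multiset.mem_toFinset, not_not, mem_filter, and_imp]
      exact fun hi _ ↦ hp i hi
  · intro p₁ hp₁ p₂ hp₂ h
    apply Nat.Partition.ext
    simp only [mem_filter, mem_univ, true_and] at hp₁ hp₂
    ext i
    simp only [φ, ne_eq, Multiset.mem_toFinset, not_not, smul_eq_mul, Finsupp.mk.injEq] at h
    by_cases hi : i = 0
    · rw [hi]
      rw [Multiset.count_eq_zero_of_notMem]
      · rw [Multiset.count_eq_zero_of_notMem]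
        intro a; exact Nat.lt_irrefl 0 (hs 0 (hp₂ 0 a))
      intro a; exact Nat.lt_irrefl 0 (hs 0 (hp₁ 0 a))
    · rw [← mul_left_inj' hi]
      rw [funext_iff] at h
      exact h.2 i
  · simp only [φ, mem_filter, mem_finsuppAntidiag, mem_univ, true_and, and_assoc]
    rintro f ⟨hf, hf₃, hf₄⟩
    refine ⟨⟨∑ i ∈ s, Multiset.replicate (f i / i) i, ?_, ?_⟩, ?_, ?_⟩
    · intro i hi
      simp only [exists_prop, Multiset.mem_sum, mem_map, Function.Embedding.coeFn_mk] at hi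
      rcases hi with ⟨t, ht, z⟩
      apply hs
      rwa [Multiset.eq_of_mem_replicate z]
    · simp_rw [Multiset.sum_sum, Multiset.sum_replicate, Nat.nsmul_eq_mul]
      rw [← hf]
      exact sum_congr rfl fun i hi => Nat.div_mul_cancel (hf₄ i hi)
    · intro i hi
      rw [Multiset.mem_sum] at hi
      rcases hi with ⟨j, hj₁, hj₂⟩
      rwa [Multiset.eq_of_mem_replicate hj₂]
    · ext i
      simp_rw [Multiset.count_sum', Multiset.count_replicate, sum_ite_eq']
      simp only [ne_eq, Multiset.mem_toFinset, not_not, smul_eq_mul, ite_mul,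
        zero_mul, Finsupp.coe_mk]
      split_ifs with h
      · exact Nat.div_mul_cancel (hf₄ i h)
      · apply symm
        rw [← Finsupp.notMem_support_iff]
        exact notMem_mono hf₃ h
  · intro p hp
    simp only [mem_filter, mem_univ, true_and] at hp
    refine Finset.prod_congr rfl fun i hi => ?_
    simp only [φ, Finsupp.coe_mk, smul_eq_mul]
    rw [if_pos (dvd_mul_left i _), Nat.mul_div_cancel _ (hs i hi)]

theorem multiset_sup_mem {s : Multiset ℕ} (h : s ≠ 0) : s.sup ∈ s := by
  induction s using Multiset.induction with
  | empty => simp at h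
  | cons a s ih =>
    rw [Multiset.sup_cons]
    rcases eq_or_ne s 0 with rfl | hs
    · simp
    · rcases le_total a s.sup with h1 | h1
      · rw [sup_eq_right.2 h1]; exact Multiset.mem_cons_of_mem (ih hs)
      · rw [sup_eq_left.2 h1]; exact Multiset.mem_cons_self _ _

end Aux

/-- Generating function for partitions with prescribed largest part `m`
(from the proof of Theorem 2). -/
theorem largestPart_genFun (t u : ℂ) (m : ℕ) (hm : 1 ≤ m) (N : ℕ) (hN : 1 ≤ N) :
    PowerSeries.coeff (R := ℂ) N
      (PowerSeries.C (R := ℂ) (t * u) * (PowerSeries.X : PowerSeries ℂ) ^ m *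
        (∏ i ∈ Finset.Icc 1 (m - 1),
          (1 - PowerSeries.C (R := ℂ) ((1 - u) * t) * (PowerSeries.X : PowerSeries ℂ) ^ i)) *
        (∏ i ∈ Finset.Icc 1 m,
          (1 - PowerSeries.C (R := ℂ) t * (PowerSeries.X : PowerSeries ℂ) ^ i))⁻¹) =
    ∑ π ∈ Finset.univ.filter (fun π : N.Partition => lPart π = m),
      t ^ kParts π * u ^ qParts π := by
  classical
  set W : ℕ → ℕ → ℂ := fun i a => if a = 0 then (if i = m then 0 else 1) else t ^ a * u with hW
  have hmnot : m ∉ Finset.Icc 1 (m - 1) := by simp [Finset.mem_Icc]; omega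
  have hsplit : Finset.Icc 1 m = insert m (Finset.Icc 1 (m - 1)) := by
    ext x; simp only [Finset.mem_Icc, Finset.mem_insert]; omega
  have hunit : PowerSeries.constantCoeff (R := ℂ)
      (∏ i ∈ Finset.Icc 1 m, (1 - PowerSeries.C (R := ℂ) t * (PowerSeries.X : PowerSeries ℂ) ^ i)) ≠ 0 := by
    rw [map_prod]
    rw [Finset.prod_congr rfl (fun i hi => ?_), Finset.prod_const_one]
    · exact one_ne_zero
    · have hi1 : 0 < i := by simp only [Finset.mem_Icc] at hi; omega
      simp [zero_pow hi1.ne']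
  have hmain : ∏ i ∈ Finset.Icc 1 m, wtSeries (W i) i =
      PowerSeries.C (R := ℂ) (t * u) * (PowerSeries.X : PowerSeries ℂ) ^ m *
        (∏ i ∈ Finset.Icc 1 (m - 1),
          (1 - PowerSeries.C (R := ℂ) ((1 - u) * t) * (PowerSeries.X : PowerSeries ℂ) ^ i)) *
        (∏ i ∈ Finset.Icc 1 m,
          (1 - PowerSeries.C (R := ℂ) t * (PowerSeries.X : PowerSeries ℂ) ^ i))⁻¹ := by
    rw [PowerSeries.eq_mul_inv_iff_mul_eq hunit, ← Finset.prod_mul_distrib, hsplit,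
      Finset.prod_insert hmnot]
    have hWm : W m = fun a => if a = 0 then (0:ℂ) else t ^ a * u := by
      funext a; simp [hW]
    have h1 : wtSeries (W m) m * (1 - PowerSeries.C (R := ℂ) t * (PowerSeries.X : PowerSeries ℂ) ^ m) =
        PowerSeries.C (R := ℂ) (t * u) * (PowerSeries.X : PowerSeries ℂ) ^ m := by
      rw [hWm, key_series t u 0 m (by omega)]
      simp [mul_comm]
    have h2 : ∀ i ∈ Finset.Icc 1 (m - 1),
        wtSeries (W i) i * (1 - PowerSeries.C (R := ℂ) t * (PowerSeries.X : PowerSeries ℂ) ^ i) =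
        1 - PowerSeries.C (R := ℂ) ((1 - u) * t) * (PowerSeries.X : PowerSeries ℂ) ^ i := by
      intro i hi
      simp only [Finset.mem_Icc] at hi
      have hWi : W i = fun a => if a = 0 then (1:ℂ) else t ^ a * u := by
        funext a; simp [hW, show i ≠ m by omega]
      rw [hWi, key_series t u 1 i (by omega), map_one]
      have : ((u - 1) * t : ℂ) = -((1 - u) * t) := by ring
      rw [this, map_neg]
      ring
    rw [h1, Finset.prod_congr rfl h2]
  rw [← hmain, weighted_prop N (Finset.Icc 1 m)
    (fun i hi => by simp only [Finset.mem_Icc] at hi; omega) W]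
  -- now the combinatorial part
  have hset : ∀ p : N.Partition, lPart p = m ↔
      ((∀ j ∈ p.parts, j ∈ Finset.Icc 1 m) ∧ m ∈ p.parts) := by
    intro p
    have hne : p.parts ≠ 0 := by
      intro h0
      have := p.parts_sum
      rw [h0] at this
      simp at this
      omega
    constructor
    · intro hl
      refine ⟨fun j hj => ?_, ?_⟩
      · simp only [Finset.mem_Icc]
        exact ⟨p.parts_pos hj, hl ▸ Multiset.le_sup hj⟩
      · rw [← hl]
        exact multiset_sup_mem hne
    · rintro ⟨hsub, hmem⟩
      refine le_antisymm ?_ (Multiset.le_sup hmem)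
      show Multiset.sup p.parts ≤ m
      rw [Multiset.sup_le]
      intro b hb
      have := hsub b hb
      simp only [Finset.mem_Icc] at this
      omega
  -- drop terms with m ∉ parts
  rw [← Finset.sum_filter_of_ne
    (p := fun p : N.Partition => lPart p = m)
    (s := Finset.univ.filter (fun p : N.Partition => ∀ j ∈ p.parts, j ∈ Finset.Icc 1 m))
    (fun p hp hne => by
      simp only [Finset.mem_filter, Finset.mem_univ, true_and] at hp
      rw [hset p]
      refine ⟨hp, ?_⟩
      by_contra hmm
      apply hne
      refine Finset.prod_eq_zero (Finset.mem_Icc.mpr ⟨hm, le_refl m⟩) ?_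
      rw [Multiset.count_eq_zero_of_notMem hmm]
      simp [hW])]
  rw [Finset.filter_filter]
  have hfe : Finset.univ.filter
        (fun p : N.Partition => (∀ j ∈ p.parts, j ∈ Finset.Icc 1 m) ∧ lPart p = m) =
      Finset.univ.filter (fun p : N.Partition => lPart p = m) := by
    apply Finset.filter_congr
    intro p _
    rw [hset p]
    constructor
    · rintro ⟨h1, h2⟩; exact ⟨h1, ((hset p).mp ((hset p).mpr h2)).2⟩
    · intro h; exact ⟨h.1, h⟩
  rw [hfe]
  apply Finset.sum_congr rfl
  intro p hp
  simp only [Finset.mem_filter, Finset.mem_univ, true_and] at hp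
  obtain ⟨hsub, hmem⟩ := (hset p).mp hp
  have hsubF : p.parts.toFinset ⊆ Finset.Icc 1 m := by
    intro i hi
    exact hsub i (Multiset.mem_toFinset.mp hi)
  rw [← Finset.prod_subset hsubF (fun i hi hni => by
    have hcz : p.parts.count i = 0 :=
      Multiset.count_eq_zero_of_notMem (fun h => hni (Multiset.mem_toFinset.mpr h))
    have him : i ≠ m := fun h => hni (Multiset.mem_toFinset.mpr (h ▸ hmem))
    simp [hW, hcz, him])]
  have hterm : ∀ i ∈ p.parts.toFinset, W i (p.parts.count i) = t ^ (p.parts.count i) * u := by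
    intro i hi
    have : p.parts.count i ≠ 0 := by
      rw [Multiset.count_ne_zero]
      exact Multiset.mem_toFinset.mp hi
    simp [hW, this]
  rw [Finset.prod_congr rfl hterm, Finset.prod_mul_distrib, Finset.prod_pow_eq_pow_sum,
    Finset.prod_const, Multiset.toFinset_sum_count_eq]
  rfl
end

section
/- Let t, u ∈ ℂ, let m ≥ 1 and 1 ≤ p ≤ m be integers, and let N ≥ 1 be an integer. Then the coefficient of q^N in the formal power series (over ℂ) t·u · q^m · (∏_{i=m−p+1}^{m−1} (1 − (1−u)·t·q^{i})) · (∏_{i=m−p+1}^{m} (1 − t·q^{i}))⁻¹ equals ∑_{π ∈ P(N), l(π) = m, s(π) ≥ m−p+1} t^{k(π)} u^{Q(π)}, the sum being over all partitions of N whose largest part equals m and whose smallest part is at least m − p + 1. (This is the generating-function identity established in the proof of Theorem 3.) -/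
open Finset PowerSeries

namespace TruncatedGF

/-! ### Multiset helpers -/

lemma card_finsetSum (s : Finset ℕ) (f : ℕ → Multiset ℕ) :
    Multiset.card (∑ i ∈ s, f i) = ∑ i ∈ s, Multiset.card (f i) := by
  induction s using Finset.cons_induction with
  | empty => simp
  | cons a s ha ih => simp [Finset.sum_cons, ih]

lemma sum_finsetSum (s : Finset ℕ) (f : ℕ → Multiset ℕ) :
    (∑ i ∈ s, f i).sum = ∑ i ∈ s, (f i).sum := by
  induction s using Finset.cons_induction with
  | empty => simp
  | cons a s ha ih => rw [Finset.sum_cons, Finset.sum_cons, Multiset.sum_add, ih]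

lemma sup_mem_of_ne_zero {s : Multiset ℕ} (h : s.sup ≠ 0) : s.sup ∈ s := by
  induction s using Multiset.induction with
  | empty => simp at h
  | cons a s ih =>
      rw [Multiset.sup_cons] at h ⊢
      rcases le_total a s.sup with h' | h'
      · rw [sup_eq_right.2 h'] at h ⊢
        exact Multiset.mem_cons_of_mem (ih h)
      · rw [sup_eq_left.2 h']
        exact Multiset.mem_cons_self a _

lemma nsmul_singleton (n : ℕ) (a : ℕ) : n • ({a} : Multiset ℕ) = Multiset.replicate n a := by
  ext b
  rw [Multiset.count_nsmul, Multiset.count_replicate, Multiset.count_singleton]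
  split_ifs <;> simp_all

/-! ### The coefficient function of each factor -/

/-- coefficient function. -/
def gc (t u : ℂ) (m i d : ℕ) : ℂ :=
  if d = 0 then (if i = m then 0 else 1) else if i ∣ d then u * t ^ (d / i) else 0

/-- The factor series. -/
noncomputable def gfac (t u : ℂ) (m i : ℕ) : PowerSeries ℂ := PowerSeries.mk (gc t u m i)

variable (t u : ℂ) (m : ℕ)

lemma coeff_mk_mul (f : ℕ → ℂ) (c : ℂ) (i d : ℕ) :
    PowerSeries.coeff d (PowerSeries.mk f * (1 - PowerSeries.C c * X ^ i)) =
      f d - c * (if i ≤ d then f (d - i) else 0) := by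
  rw [mul_sub, mul_one, map_sub, mul_left_comm, coeff_C_mul, coeff_mul_X_pow']
  simp [coeff_mk]

lemma gc_zero (i : ℕ) : gc t u m i 0 = if i = m then 0 else 1 := if_pos rfl

lemma gc_dvd {i d : ℕ} (hd : d ≠ 0) (h : i ∣ d) : gc t u m i d = u * t ^ (d / i) := by
  rw [gc, if_neg hd, if_pos h]

lemma gc_not_dvd {i d : ℕ} (hd : d ≠ 0) (h : ¬ i ∣ d) : gc t u m i d = 0 := by
  rw [gc, if_neg hd, if_neg h]

lemma gfac_mul_ne (i : ℕ) (hi : 1 ≤ i) (him : i ≠ m) :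
    gfac t u m i * (1 - PowerSeries.C t * X ^ i) =
      1 - PowerSeries.C ((1 - u) * t) * X ^ i := by
  ext d
  rw [gfac, coeff_mk_mul, map_sub, coeff_one, coeff_C_mul, coeff_X_pow]
  by_cases hd0 : d = 0
  · subst hd0
    rw [gc_zero, if_neg him, if_neg (by omega), if_pos rfl, if_neg (by omega)]
    ring
  rw [if_neg hd0]
  by_cases hdi : i ∣ d
  · obtain ⟨e, rfl⟩ := hdi
    rcases e with _ | e
    · simp at hd0
    have hle : i ≤ i * (e + 1) := Nat.le_mul_of_pos_right i (by omega)
    rw [gc_dvd t u m hd0 (dvd_mul_right i (e+1)), Nat.mul_div_cancel_left _ (by omega : 0 < i),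
      if_pos hle]
    rcases e with _ | e
    · -- d = i
      rw [show i * 1 - i = 0 by omega, gc_zero, if_neg him, if_pos (by omega : i * 1 = i)]
      ring
    · -- d = i * (e + 2)
      have h1 : i * (e + 2) - i = i * (e + 1) := by
        rw [show i * (e + 2) = i * (e + 1) + i by ring, Nat.add_sub_cancel]
      have h2 : i * (e + 1) ≠ 0 := by positivity
      rw [h1, gc_dvd t u m h2 (dvd_mul_right i (e+1)),
        Nat.mul_div_cancel_left _ (by omega : 0 < i),
        if_neg (by nlinarith : i * (e + 2) ≠ i)]
      ring
  · have h3 : i ≤ d → gc t u m i (d - i) = 0 := by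
      intro hle
      have hne : d ≠ i := fun h => hdi (h ▸ dvd_refl i)
      have hdi' : d - i ≠ 0 := by omega
      refine gc_not_dvd t u m hdi' fun h => hdi ?_
      have : d = (d - i) + i := by omega
      rw [this]; exact dvd_add h (dvd_refl i)
    rw [gc_not_dvd t u m hd0 hdi, if_neg (fun h : d = i => hdi (h ▸ dvd_refl i))]
    split_ifs with h
    · rw [h3 h]; ring
    · ring

lemma gfac_mul_eq (hm : 1 ≤ m) :
    gfac t u m m * (1 - PowerSeries.C t * X ^ m) = PowerSeries.C (t * u) * X ^ m := by
  ext d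
  rw [gfac, coeff_mk_mul, coeff_C_mul, coeff_X_pow]
  by_cases hd0 : d = 0
  · subst hd0
    rw [gc_zero, if_pos rfl, if_neg (by omega), if_neg (by omega)]
    ring
  by_cases hdi : m ∣ d
  · obtain ⟨e, rfl⟩ := hdi
    rcases e with _ | e
    · simp at hd0
    have hle : m ≤ m * (e + 1) := Nat.le_mul_of_pos_right m (by omega)
    rw [gc_dvd t u m hd0 (dvd_mul_right m (e+1)), Nat.mul_div_cancel_left _ (by omega : 0 < m),
      if_pos hle]
    rcases e with _ | e
    · rw [show m * 1 - m = 0 by omega, gc_zero, if_pos rfl, if_pos (by omega : m * 1 = m)]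
      ring
    · have h1 : m * (e + 2) - m = m * (e + 1) := by
        rw [show m * (e + 2) = m * (e + 1) + m by ring, Nat.add_sub_cancel]
      have h2 : m * (e + 1) ≠ 0 := by positivity
      rw [h1, gc_dvd t u m h2 (dvd_mul_right m (e+1)),
        Nat.mul_div_cancel_left _ (by omega : 0 < m),
        if_neg (by nlinarith : m * (e + 2) ≠ m)]
      ring
  · have h3 : m ≤ d → gc t u m m (d - m) = 0 := by
      intro hle
      have hne : d ≠ m := fun h => hdi (h ▸ dvd_refl m)
      have hdm' : d - m ≠ 0 := by omega
      refine gc_not_dvd t u m hdm' fun h => hdi ?_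
      have : d = (d - m) + m := by omega
      rw [this]; exact dvd_add h (dvd_refl m)
    rw [gc_not_dvd t u m hd0 hdi, if_neg (fun h : d = m => hdi (h ▸ dvd_refl m))]
    split_ifs with h
    · rw [h3 h]; ring
    · ring

lemma prod_gfac (hm : 1 ≤ m) (a : ℕ) (ha : 1 ≤ a) (ham : a ≤ m) :
    (∏ i ∈ Icc a m, gfac t u m i) * ∏ i ∈ Icc a m, (1 - PowerSeries.C t * X ^ i) =
      PowerSeries.C (t * u) * X ^ m *
        ∏ i ∈ Icc a (m - 1), (1 - PowerSeries.C ((1 - u) * t) * X ^ i) := by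
  rw [← Finset.prod_mul_distrib]
  have hIcc : Icc a m = insert m (Icc a (m - 1)) := by
    ext x; simp only [Finset.mem_Icc, Finset.mem_insert]; omega
  have hnm : m ∉ Icc a (m - 1) := by simp [Finset.mem_Icc]; omega
  rw [hIcc, Finset.prod_insert hnm, gfac_mul_eq t u m hm]
  congr 1
  refine Finset.prod_congr rfl fun i hi => ?_
  rw [Finset.mem_Icc] at hi
  exact gfac_mul_ne t u m i (by omega) (by omega)

/-! ### Combinatorics -/

/-- the predicate on finsupps -/
def Pcond (m : ℕ) (l : ℕ →₀ ℕ) : Prop := m ∈ l.support ∧ ∀ i ∈ l.support, i ∣ l i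

instance (m : ℕ) : DecidablePred (Pcond m) := fun l => by unfold Pcond; infer_instance

/-- the set of finsupps corresponding to partitions -/
def Aset (N m a : ℕ) : Finset (ℕ →₀ ℕ) := (finsuppAntidiag (Icc a m) N).filter (Pcond m)

lemma Aset_spec {N m a : ℕ} {l : ℕ →₀ ℕ} (hl : l ∈ Aset N m a) :
    (∑ i ∈ Icc a m, l i = N) ∧ l.support ⊆ Icc a m ∧ m ∈ l.support ∧
      ∀ i ∈ l.support, i ∣ l i := by
  rw [Aset, Finset.mem_filter, Finset.mem_finsuppAntidiag] at hl
  obtain ⟨⟨h1, h2⟩, h3, h4⟩ := hl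
  exact ⟨h1, h2, h3, h4⟩

lemma Aset_sum_support {N m a : ℕ} {l : ℕ →₀ ℕ} (hl : l ∈ Aset N m a) :
    ∑ i ∈ l.support, l i = N := by
  obtain ⟨h1, h2, -, -⟩ := Aset_spec hl
  rw [← h1]
  exact Finset.sum_subset h2 fun i _ hn => Finsupp.notMem_support_iff.mp hn

/-- The partition attached to `l ∈ Aset N m a`. -/
def Φ {N m a : ℕ} (ha : 1 ≤ a) (l : ℕ →₀ ℕ) (hl : l ∈ Aset N m a) : N.Partition where
  parts := ∑ i ∈ l.support, Multiset.replicate (l i / i) i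
  parts_pos := by
    intro j hj
    rw [Multiset.mem_sum] at hj
    obtain ⟨i, hi, hji⟩ := hj
    obtain rfl := Multiset.eq_of_mem_replicate hji
    have := (Aset_spec hl).2.1 hi
    rw [Finset.mem_Icc] at this
    omega
  parts_sum := by
    rw [sum_finsetSum]
    have h : ∀ i ∈ l.support, (Multiset.replicate (l i / i) i).sum = l i := by
      intro i hi
      rw [Multiset.sum_replicate, smul_eq_mul]
      exact Nat.div_mul_cancel ((Aset_spec hl).2.2.2 i hi)
    rw [Finset.sum_congr rfl h]
    exact Aset_sum_support hl

lemma mem_Φ_parts {N m a : ℕ} (ha : 1 ≤ a) {l : ℕ →₀ ℕ} (hl : l ∈ Aset N m a) (j : ℕ) :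
    j ∈ (Φ ha l hl).parts ↔ j ∈ l.support := by
  show j ∈ ∑ i ∈ l.support, Multiset.replicate (l i / i) i ↔ _
  rw [Multiset.mem_sum]
  constructor
  · rintro ⟨i, hi, hji⟩
    obtain rfl := Multiset.eq_of_mem_replicate hji
    exact hi
  · intro hj
    refine ⟨j, hj, Multiset.mem_replicate.2 ⟨?_, rfl⟩⟩
    have hdvd := (Aset_spec hl).2.2.2 j hj
    have hjpos : 0 < j := by
      have := (Aset_spec hl).2.1 hj
      rw [Finset.mem_Icc] at this; omega
    have hlj : l j ≠ 0 := Finsupp.mem_support_iff.mp hj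
    have : j ≤ l j := Nat.le_of_dvd (Nat.pos_of_ne_zero hlj) hdvd
    have : 1 ≤ l j / j := (Nat.one_le_div_iff hjpos).2 this
    omega

lemma Φ_count {N m a : ℕ} (ha : 1 ≤ a) {l : ℕ →₀ ℕ} (hl : l ∈ Aset N m a) (j : ℕ) :
    (Φ ha l hl).parts.count j = l j / j := by
  show Multiset.count j (∑ i ∈ l.support, Multiset.replicate (l i / i) i) = _
  rw [Multiset.count_sum']
  simp only [Multiset.count_replicate]
  rw [Finset.sum_ite_eq' l.support j fun i => l i / i]
  split_ifs with h
  · rfl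
  · rw [Finsupp.notMem_support_iff.mp h, Nat.zero_div]

/-- The finsupp attached to a partition. -/
noncomputable def Ψ {N : ℕ} (π : N.Partition) : ℕ →₀ ℕ :=
  Finsupp.onFinset π.parts.toFinset (fun i => π.parts.count i * i)
    (fun i h => Multiset.mem_toFinset.2 (by
      by_contra hc
      apply h
      show Multiset.count i π.parts * i = 0
      rw [Multiset.count_eq_zero_of_notMem hc, zero_mul]))

lemma Ψ_apply {N : ℕ} (π : N.Partition) (i : ℕ) : Ψ π i = π.parts.count i * i := rfl

lemma Ψ_support {N : ℕ} (π : N.Partition) : (Ψ π).support = π.parts.toFinset := by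
  ext i
  rw [Finsupp.mem_support_iff, Ψ_apply, Multiset.mem_toFinset]
  constructor
  · intro h
    by_contra hc
    rw [Multiset.count_eq_zero_of_notMem hc] at h
    simp at h
  · intro h
    have h1 : π.parts.count i ≠ 0 := Multiset.count_ne_zero.2 h
    have h2 : 0 < i := π.parts_pos h
    positivity

lemma sPart_eq {n : ℕ} (π : n.Partition) (h : π.parts.toFinset.Nonempty) :
    sPart π = π.parts.toFinset.min' h := by
  rw [sPart, ← Finset.coe_min' h, WithTop.untopD_coe]

lemma Φ_lPart {N m a : ℕ} (ha : 1 ≤ a) {l : ℕ →₀ ℕ} (hl : l ∈ Aset N m a) :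
    lPart (Φ ha l hl) = m := by
  obtain ⟨-, h2, h3, -⟩ := Aset_spec hl
  show (Φ ha l hl).parts.sup = m
  apply le_antisymm
  · rw [Multiset.sup_le]
    intro j hj
    have := h2 ((mem_Φ_parts ha hl j).1 hj)
    rw [Finset.mem_Icc] at this
    exact this.2
  · exact Multiset.le_sup ((mem_Φ_parts ha hl m).2 h3)

lemma Φ_sPart {N m a : ℕ} (ha : 1 ≤ a) {l : ℕ →₀ ℕ} (hl : l ∈ Aset N m a) :
    a ≤ sPart (Φ ha l hl) := by
  obtain ⟨-, h2, h3, -⟩ := Aset_spec hl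
  have hm' : m ∈ (Φ ha l hl).parts := (mem_Φ_parts ha hl m).2 h3
  have hne : (Φ ha l hl).parts.toFinset.Nonempty := ⟨m, Multiset.mem_toFinset.2 hm'⟩
  rw [sPart_eq _ hne]
  have hmem := Finset.min'_mem _ hne
  rw [Multiset.mem_toFinset, mem_Φ_parts ha hl] at hmem
  have := h2 hmem
  rw [Finset.mem_Icc] at this
  exact this.1

lemma Ψ_mem {N m a : ℕ} (hm : 1 ≤ m) (π : N.Partition) (h1 : lPart π = m) (h2 : a ≤ sPart π) :
    Ψ π ∈ Aset N m a := by
  have hsup : π.parts.sup = m := h1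
  have hparts : ∀ j ∈ π.parts, j ∈ Icc a m := by
    intro j hj
    rw [Finset.mem_Icc]
    constructor
    · have hne : π.parts.toFinset.Nonempty := ⟨j, Multiset.mem_toFinset.2 hj⟩
      rw [sPart_eq π hne] at h2
      exact h2.trans (Finset.min'_le _ j (Multiset.mem_toFinset.2 hj))
    · have := Multiset.le_sup hj
      rwa [hsup] at this
  have hsub : (Ψ π).support ⊆ Icc a m := by
    rw [Ψ_support]; intro j hj; exact hparts j (Multiset.mem_toFinset.mp hj)
  have hmem : m ∈ π.parts := by
    have h := sup_mem_of_ne_zero (s := π.parts) (by omega)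
    rwa [hsup] at h
  rw [Aset, Finset.mem_filter, Finset.mem_finsuppAntidiag]
  refine ⟨⟨?_, hsub⟩, ?_, ?_⟩
  · have hss : ∑ i ∈ Icc a m, Ψ π i = ∑ i ∈ (Ψ π).support, Ψ π i :=
      (Finset.sum_subset hsub fun i _ hni => Finsupp.notMem_support_iff.mp hni).symm
    rw [hss, Ψ_support]
    have hmap := Finset.sum_multiset_map_count π.parts (id : ℕ → ℕ)
    rw [Multiset.map_id] at hmap
    calc ∑ i ∈ π.parts.toFinset, Ψ π i
        = ∑ i ∈ π.parts.toFinset, π.parts.count i • id i := by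
          simp [Ψ_apply, smul_eq_mul]
      _ = π.parts.sum := hmap.symm
      _ = N := π.parts_sum
  · rw [Ψ_support, Multiset.mem_toFinset]; exact hmem
  · intro i _
    rw [Ψ_apply]
    exact dvd_mul_left i _

lemma ΨΦ {N m a : ℕ} (ha : 1 ≤ a) {l : ℕ →₀ ℕ} (hl : l ∈ Aset N m a) :
    Ψ (Φ ha l hl) = l := by
  ext i
  rw [Ψ_apply, Φ_count ha hl]
  by_cases hi : i ∈ l.support
  · exact Nat.div_mul_cancel ((Aset_spec hl).2.2.2 i hi)
  · rw [Finsupp.notMem_support_iff.mp hi, Nat.zero_div, zero_mul]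

lemma ΦΨ {N m a : ℕ} (ha : 1 ≤ a) (π : N.Partition) (hmem : Ψ π ∈ Aset N m a) :
    Φ ha (Ψ π) hmem = π := by
  apply Nat.Partition.ext
  show (∑ i ∈ (Ψ π).support, Multiset.replicate (Ψ π i / i) i) = π.parts
  rw [Ψ_support]
  have h : ∀ i ∈ π.parts.toFinset,
      Multiset.replicate (Ψ π i / i) i = π.parts.count i • {i} := by
    intro i hi
    have hpos : 0 < i := π.parts_pos (Multiset.mem_toFinset.mp hi)
    rw [Ψ_apply, Nat.mul_div_cancel _ hpos, nsmul_singleton]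
  rw [Finset.sum_congr rfl h, Multiset.toFinset_sum_count_nsmul_eq]

lemma prod_gc {N m a : ℕ} (t u : ℂ) (ha : 1 ≤ a) {l : ℕ →₀ ℕ} (hl : l ∈ Aset N m a) :
    ∏ i ∈ Icc a m, gc t u m i (l i) = t ^ kParts (Φ ha l hl) * u ^ qParts (Φ ha l hl) := by
  obtain ⟨h1, h2, h3, h4⟩ := Aset_spec hl
  have step1 : ∏ i ∈ Icc a m, gc t u m i (l i) = ∏ i ∈ l.support, gc t u m i (l i) :=
    (Finset.prod_subset h2 (fun i hi hni => by
      rw [Finsupp.notMem_support_iff.mp hni, gc_zero, if_neg (by rintro rfl; exact hni h3)])).symm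
  rw [step1]
  have step2 : ∀ i ∈ l.support, gc t u m i (l i) = u * t ^ (l i / i) := fun i hi =>
    gc_dvd t u m (Finsupp.mem_support_iff.mp hi) (h4 i hi)
  rw [Finset.prod_congr rfl step2, Finset.prod_mul_distrib, Finset.prod_const,
    Finset.prod_pow_eq_pow_sum]
  have hk : kParts (Φ ha l hl) = ∑ i ∈ l.support, l i / i := by
    show Multiset.card (∑ i ∈ l.support, Multiset.replicate (l i / i) i) = _
    rw [card_finsetSum]
    simp [Multiset.card_replicate]
  have hq : qParts (Φ ha l hl) = l.support.card := by
    show (Φ ha l hl).parts.toFinset.card = _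
    congr 1
    ext j
    rw [Multiset.mem_toFinset, mem_Φ_parts]
  rw [hk, hq]
  ring

end TruncatedGF

/-- Generating function for partitions with largest part `m` and smallest part at least
`m - p + 1` (from the proof of Theorem 3). -/
theorem truncated_genFun (t u : ℂ) (m p : ℕ) (hp : 1 ≤ p) (hpm : p ≤ m) (N : ℕ) (hN : 1 ≤ N) :
    PowerSeries.coeff N
      (PowerSeries.C (t * u) * (PowerSeries.X : PowerSeries ℂ) ^ m *
        (∏ i ∈ Finset.Icc (m - p + 1) (m - 1),
          (1 - PowerSeries.C ((1 - u) * t) * (PowerSeries.X : PowerSeries ℂ) ^ i)) *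
        (∏ i ∈ Finset.Icc (m - p + 1) m,
          (1 - PowerSeries.C t * (PowerSeries.X : PowerSeries ℂ) ^ i))⁻¹) =
    ∑ π ∈ Finset.univ.filter
        (fun π : N.Partition => lPart π = m ∧ m - p + 1 ≤ sPart π),
      t ^ kParts π * u ^ qParts π := by
  have hm : 1 ≤ m := hp.trans hpm
  set a := m - p + 1 with ha_def
  have ha : 1 ≤ a := by omega
  have ham : a ≤ m := by omega
  have hD : PowerSeries.constantCoeff
      (∏ i ∈ Finset.Icc a m, (1 - PowerSeries.C t * X ^ i)) ≠ 0 := by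
    rw [map_prod]
    have h : ∀ i ∈ Finset.Icc a m,
        PowerSeries.constantCoeff (1 - PowerSeries.C t * X ^ i) = 1 := by
      intro i hi
      rw [Finset.mem_Icc] at hi
      rw [map_sub, map_one, map_mul, PowerSeries.constantCoeff_C, map_pow,
        PowerSeries.constantCoeff_X, zero_pow (by omega : i ≠ 0), mul_zero, sub_zero]
    rw [Finset.prod_congr rfl h, Finset.prod_const_one]
    exact one_ne_zero
  have key : PowerSeries.C (t * u) * (PowerSeries.X : PowerSeries ℂ) ^ m *
      (∏ i ∈ Finset.Icc a (m - 1),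
        (1 - PowerSeries.C ((1 - u) * t) * (PowerSeries.X : PowerSeries ℂ) ^ i)) *
      (∏ i ∈ Finset.Icc a m,
        (1 - PowerSeries.C t * (PowerSeries.X : PowerSeries ℂ) ^ i))⁻¹
      = ∏ i ∈ Finset.Icc a m, TruncatedGF.gfac t u m i := by
    rw [← TruncatedGF.prod_gfac t u m hm a ha ham, mul_assoc,
      PowerSeries.mul_inv_cancel _ hD, mul_one]
  rw [key, PowerSeries.coeff_prod]
  simp only [TruncatedGF.gfac, PowerSeries.coeff_mk]
  have hvan : ∀ l ∈ finsuppAntidiag (Finset.Icc a m) N,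
      (∏ i ∈ Finset.Icc a m, TruncatedGF.gc t u m i (l i)) ≠ 0 → TruncatedGF.Pcond m l := by
    intro l hl hne
    rw [Finset.mem_finsuppAntidiag] at hl
    by_contra hP
    apply hne
    rw [TruncatedGF.Pcond, not_and_or] at hP
    rcases hP with hP | hP
    · refine Finset.prod_eq_zero (Finset.mem_Icc.mpr ⟨ham, le_refl m⟩) ?_
      rw [Finsupp.notMem_support_iff.mp hP, TruncatedGF.gc_zero, if_pos rfl]
    · push_neg at hP
      obtain ⟨i, hi, hdvd⟩ := hP
      refine Finset.prod_eq_zero (hl.2 hi) ?_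
      exact TruncatedGF.gc_not_dvd t u m (Finsupp.mem_support_iff.mp hi) hdvd
  rw [← Finset.sum_filter_of_ne hvan]
  have hset : (finsuppAntidiag (Finset.Icc a m) N).filter (TruncatedGF.Pcond m)
      = TruncatedGF.Aset N m a := rfl
  rw [hset]
  refine Finset.sum_bij' (fun l hl => TruncatedGF.Φ ha l hl)
    (fun π _ => TruncatedGF.Ψ π) ?_ ?_ ?_ ?_ ?_
  · intro l hl
    exact Finset.mem_filter.mpr ⟨Finset.mem_univ _,
      TruncatedGF.Φ_lPart ha hl, TruncatedGF.Φ_sPart ha hl⟩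
  · intro π hπ
    obtain ⟨-, h1, h2⟩ := Finset.mem_filter.mp hπ
    exact TruncatedGF.Ψ_mem hm π h1 h2
  · intro l hl
    exact TruncatedGF.ΨΦ ha hl
  · intro π hπ
    exact TruncatedGF.ΦΨ ha π _
  · intro l hl
    exact TruncatedGF.prod_gc t u ha hl
end
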